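/- Let p ≥ 5 be a prime, let G be a group, let H ⊴ G be a normal subgroup such that the quotient G/H is abelian, and let ρ : G → GL₂(𝔽_p) be a group homomorphism whose image contains SL₂(𝔽_p). Then the image ρ(H) also contains SL₂(𝔽_p). -/

import Mathlib

open Matrix
open scoped commutatorElement

section aux

variable {F : Type*} [Field F]

/-- upper elementary matrix in SL₂ -/
def myE (F : Type*) [Field F] (t : F) : Matrix.SpecialLinearGroup (Fin 2) F :=
  ⟨!![1, t; 0, 1], by simp [Matrix.det_fin_two_of]⟩

/-- lower elementary matrix in SL₂ -/
def myF (F : Type*) [Field F] (t : F) : Matrix.SpecialLinearGroup (Fin 2) F :=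
  ⟨!![1, 0; t, 1], by simp [Matrix.det_fin_two_of]⟩

/-- diagonal matrix diag(2, 2⁻¹) in SL₂ -/
def myD (F : Type*) [Field F] (h2 : (2 : F) ≠ 0) : Matrix.SpecialLinearGroup (Fin 2) F :=
  ⟨!![2, 0; 0, (2 : F)⁻¹], by simp [Matrix.det_fin_two_of, mul_inv_cancel₀ h2]⟩

lemma myE_myF_decomp (A : Matrix.SpecialLinearGroup (Fin 2) F) (hc : A.1 1 0 ≠ 0) :
    A = myE F ((A.1 0 0 - 1) / A.1 1 0) * myF F (A.1 1 0) *
        myE F ((A.1 1 1 - 1) / A.1 1 0) := by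
  have hdet := A.2
  rw [Matrix.det_fin_two] at hdet
  ext i j
  fin_cases i <;> fin_cases j <;>
    simp only [Matrix.SpecialLinearGroup.coe_mul] <;> simp [myE, myF, Matrix.mul_apply, Fin.sum_univ_succ]
  · field_simp; ring
  · field_simp
    linear_combination -hdet
  · field_simp; ring

lemma myE_comm (h2 : (2 : F) ≠ 0) (h3 : (3 : F) ≠ 0) (t : F) :
    myE F t = ⁅myD F h2, myE F (t / 3)⁆ := by
  ext i j
  fin_cases i <;> fin_cases j <;>
    simp only [commutatorElement_def, Matrix.SpecialLinearGroup.coe_mul, Matrix.SpecialLinearGroup.coe_inv] <;>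
    simp [commutatorElement_def, myE, myD, Matrix.SpecialLinearGroup.coe_inv,
      Matrix.adjugate_fin_two, Matrix.mul_apply, Fin.sum_univ_succ] <;>
    field_simp <;> ring

lemma myF_comm (h2 : (2 : F) ≠ 0) (h3 : (3 : F) ≠ 0) (t : F) :
    myF F t = ⁅myD F h2, myF F (-4 * t / 3)⁆ := by
  ext i j
  fin_cases i <;> fin_cases j <;>
    simp only [commutatorElement_def, Matrix.SpecialLinearGroup.coe_mul, Matrix.SpecialLinearGroup.coe_inv] <;>
    simp [commutatorElement_def, myF, myD, Matrix.SpecialLinearGroup.coe_inv,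
      Matrix.adjugate_fin_two, Matrix.mul_apply, Fin.sum_univ_succ] <;>
    field_simp <;> ring

lemma mem_of_myE_myF (K : Subgroup (Matrix.SpecialLinearGroup (Fin 2) F))
    (hE : ∀ t, myE F t ∈ K) (hF : ∀ t, myF F t ∈ K)
    (A : Matrix.SpecialLinearGroup (Fin 2) F) : A ∈ K := by
  by_cases hc : A.1 1 0 ≠ 0
  · rw [myE_myF_decomp A hc]
    exact K.mul_mem (K.mul_mem (hE _) (hF _)) (hE _)
  · push_neg at hc
    have hdet := A.2
    rw [Matrix.det_fin_two] at hdet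
    have hd : A.1 1 1 ≠ 0 := by
      intro h
      rw [hc, h] at hdet
      simp at hdet
    have hB : (A * myF F 1).1 1 0 ≠ 0 := by
      have : (A * myF F 1).1 1 0 = A.1 1 1 := by
        simp only [Matrix.SpecialLinearGroup.coe_mul]; simp [myF, Matrix.mul_apply, Fin.sum_univ_succ, hc]
      rw [this]; exact hd
    have h1 : A * myF F 1 ∈ K := by
      rw [myE_myF_decomp _ hB]
      exact K.mul_mem (K.mul_mem (hE _) (hF _)) (hE _)
    have : A = (A * myF F 1) * (myF F 1)⁻¹ := by group
    rw [this]
    exact K.mul_mem h1 (K.inv_mem (hF 1))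

end aux

theorem stmt_7 (p : ℕ) [Fact p.Prime] (hp : 5 ≤ p)
    {G : Type*} [Group G] (H : Subgroup G) [H.Normal]
    (hab : ∀ x y : G ⧸ H, x * y = y * x)
    (ρ : G →* Matrix.GeneralLinearGroup (Fin 2) (ZMod p))
    (hfull : (Matrix.SpecialLinearGroup.toGL (n := Fin 2) (R := ZMod p)).range ≤ ρ.range) :
    (Matrix.SpecialLinearGroup.toGL (n := Fin 2) (R := ZMod p)).range ≤ Subgroup.map ρ H := by
  have hprime := (Fact.out : p.Prime)
  have hndvd : ∀ n : ℕ, 0 < n → n < 5 → ((n : ℕ) : ZMod p) ≠ 0 := by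
    intro n hn hn5 h
    rw [ZMod.natCast_eq_zero_iff] at h
    have := Nat.le_of_dvd hn h
    omega
  have h2 : (2 : ZMod p) ≠ 0 := by exact_mod_cast hndvd 2 (by norm_num) (by norm_num)
  have h3 : (3 : ZMod p) ≠ 0 := by exact_mod_cast hndvd 3 (by norm_num) (by norm_num)
  -- commutators of elements of the range of ρ lie in ρ(H)
  have hcomm : ∀ x y : Matrix.GeneralLinearGroup (Fin 2) (ZMod p),
      x ∈ ρ.range → y ∈ ρ.range → ⁅x, y⁆ ∈ Subgroup.map ρ H := by
    rintro x y ⟨g, rfl⟩ ⟨g', rfl⟩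
    refine ⟨⁅g, g'⁆, ?_, by simp [map_commutatorElement]⟩
    have : ((⁅g, g'⁆ : G) : G ⧸ H) = 1 := by
      have : ((⁅g, g'⁆ : G) : G ⧸ H) = ⁅(g : G ⧸ H), (g' : G ⧸ H)⁆ :=
        map_commutatorElement (QuotientGroup.mk' H) g g'
      rw [this, commutatorElement_eq_one_iff_mul_comm]
      exact hab _ _
    exact (QuotientGroup.eq_one_iff _).mp this
  -- the subgroup of SL₂ mapping into ρ(H)
  set K : Subgroup (Matrix.SpecialLinearGroup (Fin 2) (ZMod p)) :=
    (Subgroup.map ρ H).comap (Matrix.SpecialLinearGroup.toGL) with hK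
  have hcommSL : ∀ A B : Matrix.SpecialLinearGroup (Fin 2) (ZMod p), ⁅A, B⁆ ∈ K := by
    intro A B
    have : Matrix.SpecialLinearGroup.toGL ⁅A, B⁆ =
        ⁅Matrix.SpecialLinearGroup.toGL A, Matrix.SpecialLinearGroup.toGL B⁆ :=
      map_commutatorElement _ _ _
    simp only [hK, Subgroup.mem_comap, this]
    exact hcomm _ _ (hfull ⟨A, rfl⟩) (hfull ⟨B, rfl⟩)
  have hE : ∀ t, myE (ZMod p) t ∈ K := fun t => by
    rw [myE_comm h2 h3]; exact hcommSL _ _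
  have hFm : ∀ t, myF (ZMod p) t ∈ K := fun t => by
    rw [myF_comm h2 h3]; exact hcommSL _ _
  rintro x ⟨A, rfl⟩
  exact mem_of_myE_myF K hE hFm A
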